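/- Let G be an abelian group and m ≥ 1. Say two homomorphisms ρ, ρ' : G →* Equiv.Perm (Fin m) are conjugate if there exists π ∈ Equiv.Perm (Fin m) with ρ' g = π (ρ g) π⁻¹ for all g ∈ G. Then the assignment sending a homomorphism ρ whose induced G-action on Fin m is transitive to the stabilizer of 0 under ρ induces a well-defined bijection between the set of conjugacy classes of homomorphisms ρ : G →* Equiv.Perm (Fin m) with transitive action, and the set of subgroups H of G of index m. (Well-definedness uses that for a transitive action of an abelian group all point stabilizers agree, and they are unchanged by conjugation.) -/

import Mathlib

/-- The stabilizer of `x : X` under the action of `G` on `X` through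
`ρ : G →* Equiv.Perm X`: the subgroup `{g : G | ρ g x = x}`. -/
def stabOf {G X : Type*} [Group G] (ρ : G →* Equiv.Perm X) (x : X) : Subgroup G :=
  Subgroup.comap ρ (MulAction.stabilizer (Equiv.Perm X) x)

/-- The conjugacy equivalence relation on transitive homomorphisms
`G →* Equiv.Perm (Fin m)`: `ρ ∼ ρ'` iff there is `π` with `ρ' g = π (ρ g) π⁻¹` for all
`g`. -/
def conjSetoid (G : Type*) [Group G] (m : ℕ) :
    Setoid {ρ : G →* Equiv.Perm (Fin m) // ∀ x y : Fin m, ∃ g : G, ρ g x = y} where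
  r ρ ρ' := ∃ π : Equiv.Perm (Fin m), ∀ g : G, ρ'.1 g = π * ρ.1 g * π⁻¹
  iseqv := by
    constructor
    · intro ρ; exact ⟨1, fun g => by group⟩
    · rintro ρ ρ' ⟨π, h⟩
      exact ⟨π⁻¹, fun g => by rw [h g]; group⟩
    · rintro ρ ρ' ρ'' ⟨π, h⟩ ⟨π', h'⟩
      exact ⟨π' * π, fun g => by rw [h' g, h g]; group⟩

lemma mem_stabOf {G X : Type*} [Group G] (ρ : G →* Equiv.Perm X) (x : X) (g : G) :
    g ∈ stabOf ρ x ↔ ρ g x = x := Iff.rfl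

lemma stabOf_le {G X : Type*} [CommGroup G] (ρ : G →* Equiv.Perm X)
    {x y : X} (g0 : G) (hg0 : ρ g0 x = y) : stabOf ρ x ≤ stabOf ρ y := by
  intro h hh
  rw [mem_stabOf] at hh ⊢
  have : ρ h (ρ g0 x) = ρ g0 (ρ h x) := by
    rw [← Equiv.Perm.mul_apply, ← Equiv.Perm.mul_apply, ← map_mul, ← map_mul, mul_comm]
  rw [hg0] at this
  rw [this, hh, hg0]

lemma stabOf_eq {G X : Type*} [CommGroup G] (ρ : G →* Equiv.Perm X)
    (htr : ∀ x y : X, ∃ g : G, ρ g x = y) (x y : X) : stabOf ρ x = stabOf ρ y := by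
  obtain ⟨g, hg⟩ := htr x y
  obtain ⟨g', hg'⟩ := htr y x
  exact le_antisymm (stabOf_le ρ g hg) (stabOf_le ρ g' hg')

lemma stabOf_index {G : Type*} [Group G] {m : ℕ} (ρ : G →* Equiv.Perm (Fin m))
    (htr : ∀ x y : Fin m, ∃ g : G, ρ g x = y) (x : Fin m) : (stabOf ρ x).index = m := by
  letI : MulAction G (Fin m) := MulAction.compHom (Fin m) ρ
  have hsmul : ∀ (g : G) (y : Fin m), g • y = ρ g y := fun _ _ => rfl
  haveI : MulAction.IsPretransitive G (Fin m) :=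
    ⟨fun a b => by obtain ⟨g, hg⟩ := htr a b; exact ⟨g, hg⟩⟩
  have : stabOf ρ x = MulAction.stabilizer G x := by
    ext g; rw [mem_stabOf, MulAction.mem_stabilizer_iff, hsmul]
  rw [this, MulAction.index_stabilizer_of_transitive, Nat.card_eq_fintype_card,
    Fintype.card_fin]

/-- The permutation action of `G` on `Fin m` obtained from left multiplication on `G ⧸ H`
transported along an equivalence `e : G ⧸ H ≃ Fin m`. -/
def rhoOf {G : Type*} [Group G] {m : ℕ} (H : Subgroup G) (e : G ⧸ H ≃ Fin m) :
    G →* Equiv.Perm (Fin m) where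
  toFun g := e.permCongr (MulAction.toPerm g)
  map_one' := by ext x; simp
  map_mul' g h := by
    ext x
    simp [Equiv.permCongr_apply, Equiv.Perm.mul_apply, mul_smul]

lemma rhoOf_apply {G : Type*} [Group G] {m : ℕ} (H : Subgroup G) (e : G ⧸ H ≃ Fin m)
    (g : G) (x : Fin m) : rhoOf H e g x = e (g • e.symm x) := rfl

lemma rhoOf_transitive {G : Type*} [Group G] {m : ℕ} (H : Subgroup G) (e : G ⧸ H ≃ Fin m) :
    ∀ x y : Fin m, ∃ g : G, rhoOf H e g x = y := by
  intro x y
  obtain ⟨a, ha⟩ := QuotientGroup.mk_surjective (e.symm x)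
  obtain ⟨b, hb⟩ := QuotientGroup.mk_surjective (e.symm y)
  refine ⟨b * a⁻¹, ?_⟩
  rw [rhoOf_apply, ← ha]
  have : (b * a⁻¹) • (↑a : G ⧸ H) = ↑b := by
    have h1 : (b * a⁻¹) • (↑a : G ⧸ H) = ↑(b * a⁻¹ * a) := rfl
    rw [h1, inv_mul_cancel_right]
  rw [this, hb, Equiv.apply_symm_apply]

lemma stabOf_rhoOf {G : Type*} [Group G] {m : ℕ} (H : Subgroup G) (e : G ⧸ H ≃ Fin m)
    (x : Fin m) (hx : e.symm x = ↑(1 : G)) : stabOf (rhoOf H e) x = H := by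
  ext g
  rw [mem_stabOf, rhoOf_apply, hx]
  have : g • (↑(1 : G) : G ⧸ H) = ↑g := by
    have h1 : g • (↑(1 : G) : G ⧸ H) = ↑(g * 1) := rfl
    rw [h1, mul_one]
  rw [this]
  rw [show x = e ↑(1 : G) from by rw [← hx, Equiv.apply_symm_apply]]
  rw [Equiv.apply_eq_iff_eq, QuotientGroup.eq]
  simp

lemma conj_of_stab_eq {G : Type*} [Group G] {m : ℕ} (ρ ρ' : G →* Equiv.Perm (Fin m))
    (htr : ∀ x y : Fin m, ∃ g : G, ρ g x = y) (x0 : Fin m)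
    (hs : stabOf ρ x0 = stabOf ρ' x0) :
    ∃ π : Equiv.Perm (Fin m), ∀ g : G, ρ' g = π * ρ g * π⁻¹ := by
  choose c hc using fun x => htr x0 x
  set f : Fin m → Fin m := fun x => ρ' (c x) x0 with hf
  have key : ∀ (g : G) (x : Fin m), ρ g x0 = x → f x = ρ' g x0 := by
    intro g x hgx
    have h1 : (c x)⁻¹ * g ∈ stabOf ρ x0 := by
      rw [mem_stabOf, map_mul, Equiv.Perm.mul_apply, hgx.trans (hc x).symm, map_inv]
      exact Equiv.symm_apply_apply _ _
    rw [hs, mem_stabOf] at h1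
    have : ρ' g x0 = ρ' (c x * ((c x)⁻¹ * g)) x0 := by rw [mul_inv_cancel_left]
    rw [this, map_mul, Equiv.Perm.mul_apply, h1]
  have hequiv : ∀ (g : G) (x : Fin m), f (ρ g x) = ρ' g (f x) := by
    intro g x
    have : ρ (g * c x) x0 = ρ g x := by
      rw [map_mul, Equiv.Perm.mul_apply, hc x]
    rw [key (g * c x) (ρ g x) this, map_mul, Equiv.Perm.mul_apply]
  have hinj : Function.Injective f := by
    intro x y hxy
    have hxy' : ρ' (c x) x0 = ρ' (c y) x0 := hxy
    have h1 : (c x)⁻¹ * c y ∈ stabOf ρ' x0 := by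
      rw [mem_stabOf, map_mul, Equiv.Perm.mul_apply, ← hxy', map_inv]
      exact Equiv.symm_apply_apply _ _
    rw [← hs, mem_stabOf, map_mul, Equiv.Perm.mul_apply, map_inv] at h1
    have := congrArg (ρ (c x)) h1
    rw [Equiv.Perm.coe_inv, Equiv.apply_symm_apply, hc x] at this
    rw [← hc y, ← this]
  have hbij : Function.Bijective f := Finite.injective_iff_bijective.mp hinj
  refine ⟨Equiv.ofBijective f hbij, fun g => ?_⟩
  refine Equiv.ext fun y => ?_
  have h2 : f ((Equiv.ofBijective f hbij).symm y) = y :=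
    (Equiv.ofBijective f hbij).apply_symm_apply y
  calc ρ' g y = ρ' g (f ((Equiv.ofBijective f hbij).symm y)) := by rw [h2]
    _ = f (ρ g ((Equiv.ofBijective f hbij).symm y)) := (hequiv g _).symm
    _ = (Equiv.ofBijective f hbij * ρ g * (Equiv.ofBijective f hbij)⁻¹) y := rfl

/-- Let `G` be an abelian group and `m ≥ 1`.  The assignment sending a
homomorphism `ρ : G →* Equiv.Perm (Fin m)` with transitive action to the stabilizer of
`0` induces a well-defined bijection between conjugacy classes of transitive
homomorphisms and subgroups of `G` of index `m`. -/
theorem conj_classes_transitive_hom_equiv_index_subgroups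
    {G : Type*} [CommGroup G] (m : ℕ) (hm : 1 ≤ m) :
    ∃ e : Quotient (conjSetoid G m) ≃ {H : Subgroup G // H.index = m},
      ∀ ρ : {ρ : G →* Equiv.Perm (Fin m) // ∀ x y : Fin m, ∃ g : G, ρ g x = y},
        (e (Quotient.mk (conjSetoid G m) ρ) : Subgroup G) = stabOf ρ.1 ⟨0, hm⟩ := by
  set x0 : Fin m := ⟨0, hm⟩ with hx0
  have hwd : ∀ ρ ρ' : {ρ : G →* Equiv.Perm (Fin m) // ∀ x y : Fin m, ∃ g : G, ρ g x = y},
      (conjSetoid G m).r ρ ρ' → stabOf ρ.1 x0 = stabOf ρ'.1 x0 := by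
    rintro ρ ρ' ⟨π, h⟩
    have h1 : stabOf ρ'.1 x0 = stabOf ρ.1 (π⁻¹ x0) := by
      ext g
      rw [mem_stabOf, mem_stabOf, h g, Equiv.Perm.mul_apply, Equiv.Perm.mul_apply]
      constructor
      · intro hg
        apply π.injective
        rw [hg, Equiv.Perm.coe_inv, Equiv.apply_symm_apply]
      · intro hg; rw [hg, Equiv.Perm.coe_inv, Equiv.apply_symm_apply]
    rw [h1, stabOf_eq ρ.1 ρ.2 (π⁻¹ x0) x0]
  set F : {ρ : G →* Equiv.Perm (Fin m) // ∀ x y : Fin m, ∃ g : G, ρ g x = y} →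
      {H : Subgroup G // H.index = m} :=
    fun ρ => ⟨stabOf ρ.1 x0, stabOf_index ρ.1 ρ.2 x0⟩ with hF
  set Fq : Quotient (conjSetoid G m) → {H : Subgroup G // H.index = m} :=
    Quotient.lift F (fun ρ ρ' h => Subtype.ext (hwd ρ ρ' h)) with hFq
  have hbij : Function.Bijective Fq := by
    constructor
    · intro q q'
      induction q using Quotient.ind
      induction q' using Quotient.ind
      rename_i ρ ρ'
      intro hq
      have hs : stabOf ρ.1 x0 = stabOf ρ'.1 x0 := congrArg Subtype.val hq
      exact Quotient.sound (conj_of_stab_eq ρ.1 ρ'.1 ρ.2 x0 hs)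
    · rintro ⟨H, hH⟩
      have hcard : Nat.card (G ⧸ H) = m := hH
      haveI : Finite (G ⧸ H) := Nat.finite_of_card_ne_zero (by omega)
      haveI : Fintype (G ⧸ H) := Fintype.ofFinite _
      have hcard' : Fintype.card (G ⧸ H) = m := by
        rw [← Nat.card_eq_fintype_card, hcard]
      set e0 : G ⧸ H ≃ Fin m := Fintype.equivFinOfCardEq hcard' with he0
      set e : G ⧸ H ≃ Fin m := e0.trans (Equiv.swap (e0 ↑(1 : G)) x0) with he
      have hsymm : e.symm x0 = ↑(1 : G) := by
        rw [he]
        simp [Equiv.symm_trans_apply, Equiv.swap_apply_right]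
      refine ⟨Quotient.mk (conjSetoid G m) ⟨rhoOf H e, rhoOf_transitive H e⟩, ?_⟩
      exact Subtype.ext (stabOf_rhoOf H e x0 hsymm)
  exact ⟨Equiv.ofBijective Fq hbij, fun ρ => rfl⟩
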